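/- Let φ, ψ be structural sets in ℝ_{0,m} and f: ℝᵐ → ℝ_{0,m} be C²-smooth. Then Ψ₁^{φ,ψ}(φ∂[ψ∂[f]]) = -2 ψ∂[f]ψ∂ - φ∂[Ψ₁^{φ,ψ}(ψ∂[f])]. -/

import Mathlib

open CliffordAlgebra

noncomputable section

/-- The quadratic form of `ℝ_{0,m}`: negative definite on `ℝ^m`. -/
abbrev Qf (m : ℕ) : QuadraticForm ℝ (Fin m → ℝ) :=
  QuadraticMap.weightedSumSquares ℝ (fun _ : Fin m => (-1 : ℝ))

/-- The real Clifford algebra `ℝ_{0,m}`. -/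
abbrev Cl (m : ℕ) := CliffordAlgebra (Qf m)

/-- A structural set: an orthonormal basis `ψ¹,…,ψᵐ` of `ℝᵐ`. -/
def IsStructuralSet {m : ℕ} (ψ : Fin m → (Fin m → ℝ)) : Prop :=
  ∀ i j, (∑ t, ψ i t * ψ j t) = if i = j then (1 : ℝ) else 0

/-- The ordered product `ψ_A = ψ^{j₁} ⋯ ψ^{j_k}` for `A = {j₁ < ⋯ < j_k}`. -/
def prodS {m : ℕ} (ψ : Fin m → (Fin m → ℝ)) (A : Finset (Fin m)) : Cl m :=
  ((A.sort (· ≤ ·)).map (fun i => ι (Qf m) (ψ i))).prod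

/-- The operator `Ψ_k^{φ,ψ}(a) = Σ_{|A|=k} φ_A a ψ̂_A`. -/
def PsiK {m : ℕ} (φ ψ : Fin m → (Fin m → ℝ)) (k : ℕ) (a : Cl m) : Cl m :=
  ∑ A ∈ Finset.univ.filter (fun A : Finset (Fin m) => A.card = k),
    prodS φ A * a * reverse (prodS ψ A)

/-- `Ψ₊ = Σ_{k even} Ψ_k`. -/
def PsiPlus {m : ℕ} (φ ψ : Fin m → (Fin m → ℝ)) (a : Cl m) : Cl m :=
  ∑ k ∈ (Finset.range (m + 1)).filter (fun k => Even k), PsiK φ ψ k a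

/-- `Ψ₋ = Σ_{k odd} Ψ_k`. -/
def PsiMinus {m : ℕ} (φ ψ : Fin m → (Fin m → ℝ)) (a : Cl m) : Cl m :=
  ∑ k ∈ (Finset.range (m + 1)).filter (fun k => Odd k), PsiK φ ψ k a

/-- `Ψ₁^{φ,ψ}(a) = Σⱼ φʲ a ψʲ`. -/
def Psi1 {m : ℕ} (φ ψ : Fin m → (Fin m → ℝ)) (a : Cl m) : Cl m :=
  ∑ j, ι (Qf m) (φ j) * a * ι (Qf m) (ψ j)

/-- The standard basis of `ℝᵐ`. -/
def stdB {m : ℕ} (i : Fin m) : Fin m → ℝ := Pi.single i 1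

/-- The basis multivector `e_A`. -/
def eA {m : ℕ} (A : Finset (Fin m)) : Cl m := prodS stdB A

/-- The element with coefficients `c` in the multivector basis. -/
def toCl {m : ℕ} (c : Finset (Fin m) → ℝ) : Cl m := ∑ A, c A • eA A

/-- The space `ℝ_{0,m}^{(k)}` of `k`-grade multivectors. -/
def gradeK (m k : ℕ) : Submodule ℝ (Cl m) :=
  Submodule.span ℝ {x | ∃ A : Finset (Fin m), A.card = k ∧ x = eA A}

/-- Coefficient functions of `ℝ_{0,m}`-valued maps. -/
abbrev Coef (m : ℕ) := Finset (Fin m) → ℝ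

/-- The coefficients of the even part `f₊`. -/
def cEven {m : ℕ} (c : Coef m) : Coef m := fun A => if Even A.card then c A else 0

/-- The coefficients of the odd part `f₋`. -/
def cOdd {m : ℕ} (c : Coef m) : Coef m := fun A => if Odd A.card then c A else 0

/-- The even part of a Clifford number. -/
def evenPart {m : ℕ} (a : Cl m) : Cl m :=
  (DirectSum.decompose (evenOdd (Qf m)) a 0 : evenOdd (Qf m) 0)

/-- The odd part of a Clifford number. -/
def oddPart {m : ℕ} (a : Cl m) : Cl m :=
  (DirectSum.decompose (evenOdd (Qf m)) a 1 : evenOdd (Qf m) 1)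

/-- Partial derivative `∂F/∂xᵢ` of a coefficient function. -/
def pd {m : ℕ} (i : Fin m) (F : (Fin m → ℝ) → Coef m) : (Fin m → ℝ) → Coef m :=
  fun x => fderiv ℝ F x (Pi.single i 1)

/-- The sandwich operator `φ∂[f]ψ∂ = Σᵢⱼ φⁱ (∂²f/∂xᵢ∂xⱼ) ψʲ` for `f = Σ_A F_A e_A`. -/
def sandwichD {m : ℕ} (φ ψ : Fin m → (Fin m → ℝ)) (F : (Fin m → ℝ) → Coef m)
    (x : Fin m → ℝ) : Cl m :=
  ∑ i, ∑ j, ι (Qf m) (φ i) * toCl (pd i (pd j F) x) * ι (Qf m) (ψ j)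

/-- The operator `φ∂[ψ∂[f]] = Σᵢⱼ φⁱ ψʲ ∂²f/∂xᵢ∂xⱼ`. -/
def ddD {m : ℕ} (φ ψ : Fin m → (Fin m → ℝ)) (F : (Fin m → ℝ) → Coef m)
    (x : Fin m → ℝ) : Cl m :=
  ∑ i, ∑ j, ι (Qf m) (φ i) * (ι (Qf m) (ψ j) * toCl (pd i (pd j F) x))

/-- The componentwise Laplacian `Δf = Σᵢ ∂²f/∂xᵢ²`. -/
def lapD {m : ℕ} (F : (Fin m → ℝ) → Coef m) (x : Fin m → ℝ) : Cl m :=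
  ∑ i, toCl (pd i (pd i F) x)

lemma polar_eq {m : ℕ} (u v : Fin m → ℝ) :
    QuadraticMap.polar (Qf m) u v = -2 * ∑ t, u t * v t := by
  simp only [QuadraticMap.polar, QuadraticMap.weightedSumSquares_apply, Pi.add_apply,
    smul_eq_mul, neg_one_mul]
  rw [Finset.mul_sum, ← Finset.sum_sub_distrib, ← Finset.sum_sub_distrib]
  exact Finset.sum_congr rfl fun t _ => by ring

lemma anti_aux {m : ℕ} (φ : Fin m → (Fin m → ℝ)) (hφ : IsStructuralSet φ) (i k : Fin m) :
    ι (Qf m) (φ k) * ι (Qf m) (φ i)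
      = algebraMap ℝ (Cl m) (if i = k then -2 else 0) - ι (Qf m) (φ i) * ι (Qf m) (φ k) := by
  have h := ι_mul_ι_add_swap (Q := Qf m) (φ k) (φ i)
  rw [polar_eq, hφ k i] at h
  have h2 : (-2 : ℝ) * (if k = i then 1 else 0) = if i = k then -2 else 0 := by
    rcases eq_or_ne i k with rfl | hne
    · simp
    · simp [hne, Ne.symm hne]
  rw [h2] at h
  exact eq_sub_of_add_eq h

lemma pd_symm {m : ℕ} (F : (Fin m → ℝ) → Coef m) (hF : ContDiff ℝ 2 F)
    (i j : Fin m) (x : Fin m → ℝ) : pd i (pd j F) x = pd j (pd i F) x := by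
  have hd : Differentiable ℝ (fderiv ℝ F) :=
    (hF.fderiv_right (m := 1) (by norm_num)).differentiable (by norm_num)
  have hpd : ∀ (u y v : Fin m → ℝ),
      fderiv ℝ (fun z => fderiv ℝ F z u) y v = fderiv ℝ (fderiv ℝ F) y v u := by
    intro u y v
    rw [fderiv_clm_apply (hd y) (differentiableAt_const u)]
    simp
  have hsym := (hF.contDiffAt (x := x)).isSymmSndFDerivAt (by simp [minSmoothness_of_isRCLikeNormedField])
  show fderiv ℝ (fun z => fderiv ℝ F z (Pi.single j 1)) x (Pi.single i 1)
      = fderiv ℝ (fun z => fderiv ℝ F z (Pi.single i 1)) x (Pi.single j 1)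
  rw [hpd, hpd, hsym.eq]

/-- for C²-smooth `f : ℝᵐ → ℝ_{0,m}`,
`Ψ₁^{φ,ψ}(φ∂[ψ∂[f]]) = -2 ψ∂[f]ψ∂ - φ∂[Ψ₁^{φ,ψ}(ψ∂[f])]`. -/
theorem psi1_dd {m : ℕ} (φ ψ : Fin m → (Fin m → ℝ))
    (hφ : IsStructuralSet φ) (hψ : IsStructuralSet ψ)
    (F : (Fin m → ℝ) → Coef m) (hF : ContDiff ℝ 2 F) :
    ∀ x : Fin m → ℝ,
      Psi1 φ ψ (ddD φ ψ F x)
        = -2 • sandwichD ψ ψ F x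
            - ∑ i, ι (Qf m) (φ i) *
                Psi1 φ ψ (∑ j, ι (Qf m) (ψ j) * toCl (pd i (pd j F) x)) := by
  intro x
  have key : ∀ (i k : Fin m) (b : Cl m),
      ι (Qf m) (φ k) * (ι (Qf m) (φ i) * b) * ι (Qf m) (ψ k)
        + ι (Qf m) (φ i) * (ι (Qf m) (φ k) * b * ι (Qf m) (ψ k))
      = (if i = k then (-2 : ℝ) else 0) • (b * ι (Qf m) (ψ k)) := by
    intro i k b
    rw [← mul_assoc (ι (Qf m) (φ k)), anti_aux φ hφ i k, sub_mul, ← Algebra.smul_def]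
    simp only [sub_mul, smul_mul_assoc, mul_assoc]
    abel
  rw [eq_sub_iff_add_eq]
  unfold Psi1 ddD sandwichD
  simp only [Finset.mul_sum, Finset.sum_mul]
  set A : Fin m → Fin m → Cl m := fun i j => toCl (pd i (pd j F) x) with hA
  simp only [show ∀ i j, toCl (pd i (pd j F) x) = A i j from fun _ _ => rfl]
  have hAsym : ∀ i j, A i j = A j i := by
    intro i j; rw [hA]; simp only; rw [pd_symm F hF]
  rw [show (∑ i : Fin m, ∑ k : Fin m, ∑ j : Fin m,
        ι (Qf m) (φ i) * (ι (Qf m) (φ k) * (ι (Qf m) (ψ j) * A i j) * ι (Qf m) (ψ k)))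
      = ∑ k : Fin m, ∑ i : Fin m, ∑ j : Fin m,
        ι (Qf m) (φ i) * (ι (Qf m) (φ k) * (ι (Qf m) (ψ j) * A i j) * ι (Qf m) (ψ k))
      from Finset.sum_comm]
  simp only [← Finset.sum_add_distrib]
  rw [Finset.sum_congr rfl fun k _ => Finset.sum_congr rfl fun i _ =>
    Finset.sum_congr rfl fun j _ => key i k (ι (Qf m) (ψ j) * A i j)]
  rw [Finset.sum_congr rfl fun k (_ : k ∈ Finset.univ) =>
    (Finset.sum_comm : (∑ i : Fin m, ∑ j : Fin m, (if i = k then (-2:ℝ) else 0) •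
      (ι (Qf m) (ψ j) * A i j * ι (Qf m) (ψ k))) = _)]
  simp only [ite_smul, zero_smul, Finset.sum_ite_eq', Finset.mem_univ, if_true]
  rw [Finset.sum_comm]
  simp only [Finset.smul_sum]
  refine Finset.sum_congr rfl fun j _ => Finset.sum_congr rfl fun k _ => ?_
  rw [hAsym]
  have : ((-2 : ℤ) : ℝ) = (-2 : ℝ) := by norm_num
  rw [← this, Int.cast_smul_eq_zsmul]
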